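/- For n ≥ 4, any two distinct vertices of the folded hypercube FQ_n have either exactly two common neighbors or none. -/

import Mathlib

open Finset
open scoped symmDiff

def Q (n : ℕ) : SimpleGraph (Fin n → ZMod 2) :=
  SimpleGraph.fromRel (fun u v => hammingDist u v = 1)

def FQ (n : ℕ) : SimpleGraph (Fin n → ZMod 2) :=
  SimpleGraph.fromRel (fun u v => hammingDist u v = 1 ∨ hammingDist u v = n)

def Dset {n : ℕ} (u v : Fin n → ZMod 2) : Finset (Fin n) :=
  Finset.univ.filter fun i => u i ≠ v i

def flp {n : ℕ} (u : Fin n → ZMod 2) (s : Finset (Fin n)) : Fin n → ZMod 2 :=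
  fun i => if i ∈ s then u i + 1 else u i

lemma hd_eq {n : ℕ} (u v : Fin n → ZMod 2) : hammingDist u v = (Dset u v).card := rfl

lemma Dset_comm {n : ℕ} (u v : Fin n → ZMod 2) : Dset u v = Dset v u := by
  ext i; simp [Dset, ne_comm]

lemma Dset_flp {n : ℕ} (u v : Fin n → ZMod 2) (s : Finset (Fin n)) :
    Dset v (flp u s) = Dset v u ∆ s := by
  ext i
  have h2 : ∀ a b : ZMod 2, (a ≠ b + 1) ↔ a = b := by decide
  simp only [Dset, mem_filter, mem_univ, true_and, Finset.mem_symmDiff]; simp only [flp]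
  by_cases h : i ∈ s <;> simp [h, h2]

lemma flp_Dset {n : ℕ} (u w : Fin n → ZMod 2) : flp u (Dset u w) = w := by
  funext i
  have h2 : ∀ a b : ZMod 2, a ≠ b → b = a + 1 := by decide
  simp only [flp, Dset, mem_filter, mem_univ, true_and]
  by_cases h : u i ≠ w i
  · simp [h, (h2 _ _ h).symm]
  · simp [h]; exact not_not.mp h

lemma Dset_self {n : ℕ} (u : Fin n → ZMod 2) : Dset u u = ∅ := by simp [Dset]

lemma flp_self {n : ℕ} (u : Fin n → ZMod 2) (s : Finset (Fin n)) :
    Dset u (flp u s) = s := by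
  rw [Dset_flp, Dset_self, ← Finset.bot_eq_empty, bot_symmDiff]

lemma ne_of_Dset {n : ℕ} {u w : Fin n → ZMod 2} (h : Dset u w ≠ ∅) : u ≠ w := by
  intro he; exact h (he ▸ Dset_self u)

lemma sds_mem {α : Type*} [DecidableEq α] {C : Finset α} {k : α} (h : k ∈ C) :
    C ∆ ({k} : Finset α) = C.erase k := by
  ext x; by_cases hx : x = k <;> simp [Finset.mem_symmDiff, hx, h]

lemma sds_not_mem {α : Type*} [DecidableEq α] {C : Finset α} {k : α} (h : k ∉ C) :
    C ∆ ({k} : Finset α) = insert k C := by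
  ext x; by_cases hx : x = k <;> simp [Finset.mem_symmDiff, hx, h]

lemma sds_univ {α : Type*} [DecidableEq α] [Fintype α] (C : Finset α) :
    C ∆ (univ : Finset α) = Cᶜ := by
  rw [← Finset.top_eq_univ, symmDiff_top, hnot_eq_compl]

lemma adj_iff {n : ℕ} (hn : 0 < n) (a b : Fin n → ZMod 2) :
    (FQ n).Adj a b ↔ ((Dset a b).card = 1 ∨ Dset a b = univ) := by
  haveI : NeZero n := ⟨by omega⟩
  have hcu : (Dset a b).card = n ↔ Dset a b = univ := by
    rw [← Finset.card_eq_iff_eq_univ, Fintype.card_fin]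
  show (SimpleGraph.fromRel _).Adj a b ↔ _
  rw [SimpleGraph.fromRel_adj, hd_eq, hd_eq, Dset_comm b a, or_self, hcu]
  constructor
  · rintro ⟨_, h⟩; exact h
  · intro h
    refine ⟨?_, h⟩
    apply ne_of_Dset
    intro he
    rcases h with h | h
    · rw [he] at h; simp at h
    · rw [he] at h
      have : (univ : Finset (Fin n)).Nonempty := univ_nonempty
      rw [← h] at this
      simp at this

theorem folded_hypercube_common_neighbors (n : ℕ) (hn : 4 ≤ n)
    (u v : Fin n → ZMod 2) (huv : u ≠ v) :
    {w | (FQ n).Adj u w ∧ (FQ n).Adj v w}.ncard = 2 ∨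
    {w | (FQ n).Adj u w ∧ (FQ n).Adj v w} = ∅ := by
  have hn0 : 0 < n := by omega
  set C := Dset u v with hC
  have hCne : C ≠ ∅ := by
    intro h
    apply huv
    have := flp_Dset u v
    rw [← hC, h] at this
    rw [← this]
    funext i; simp [flp]
  have hc0 : C.card ≠ 0 := by simpa [Finset.card_eq_zero] using hCne
  have hcn : C.card ≤ n := by
    have := Finset.card_le_univ C
    simpa using this
  have hmem : ∀ w, w ∈ {w | (FQ n).Adj u w ∧ (FQ n).Adj v w} ↔
      (((Dset u w).card = 1 ∨ Dset u w = univ) ∧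
       ((Dset v w).card = 1 ∨ Dset v w = univ)) := by
    intro w
    simp only [Set.mem_setOf_eq, adj_iff hn0]
  have hB : ∀ w : Fin n → ZMod 2, Dset v w = C ∆ Dset u w := by
    intro w
    conv_lhs => rw [← flp_Dset u w]
    rw [Dset_flp, Dset_comm v u]
  by_cases hc2 : C.card = 2
  · left
    obtain ⟨i, j, hij, hCij⟩ := Finset.card_eq_two.mp hc2
    have hSeq : {w | (FQ n).Adj u w ∧ (FQ n).Adj v w} = {flp u {i}, flp u {j}} := by
      ext w
      rw [hmem w]
      constructor
      · rintro ⟨hA, hBc⟩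
        rw [hB w] at hBc
        rcases hA with hA1 | hAu
        · obtain ⟨k, hk⟩ := Finset.card_eq_one.mp hA1
          rw [hk] at hBc
          have hkC : k ∈ C := by
            by_contra hkC
            rw [sds_not_mem hkC] at hBc
            rcases hBc with h | h
            · rw [Finset.card_insert_of_notMem hkC, hc2] at h; omega
            · have := congrArg Finset.card h
              rw [Finset.card_insert_of_notMem hkC, hc2, Finset.card_univ,
                Fintype.card_fin] at this
              omega
          have hw : w = flp u {k} := by rw [← hk, flp_Dset]
          rw [hCij, Finset.mem_insert, Finset.mem_singleton] at hkC
          rcases hkC with rfl | rfl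
          · left; exact hw
          · right; exact hw
        · rw [hAu, sds_univ] at hBc
          rcases hBc with h | h
          · rw [Finset.card_compl, hc2, Fintype.card_fin] at h; omega
          · exfalso; apply hCne
            have := congrArg Finset.card h
            rw [Finset.card_compl, hc2, Finset.card_univ, Fintype.card_fin] at this
            omega
      · have hiC : i ∈ C := by rw [hCij]; simp
        have hjC : j ∈ C := by rw [hCij]; simp
        rintro (rfl | rfl)
        · refine ⟨Or.inl ?_, Or.inl ?_⟩
          · rw [flp_self]; simp
          · rw [hB, flp_self, sds_mem hiC, Finset.card_erase_of_mem hiC, hc2]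
        · refine ⟨Or.inl ?_, Or.inl ?_⟩
          · rw [flp_self]; simp
          · rw [hB, flp_self, sds_mem hjC, Finset.card_erase_of_mem hjC, hc2]
    rw [hSeq]
    apply Set.ncard_pair
    intro he
    have h1 : ({i} : Finset (Fin n)) = {j} := by
      rw [← flp_self u {i}, ← flp_self u {j}, he]
    apply hij
    simpa using h1
  · by_cases hcn1 : C.card = n - 1
    · left
      have hSeq : {w | (FQ n).Adj u w ∧ (FQ n).Adj v w} = {flp u univ, flp v univ} := by
        ext w
        rw [hmem w]
        constructor
        · rintro ⟨hA, hBc⟩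
          rw [hB w] at hBc
          rcases hA with hA1 | hAu
          · obtain ⟨k, hk⟩ := Finset.card_eq_one.mp hA1
            rw [hk] at hBc
            by_cases hkC : k ∈ C
            · exfalso
              rw [sds_mem hkC] at hBc
              rcases hBc with h | h
              · rw [Finset.card_erase_of_mem hkC, hcn1] at h; omega
              · have := congrArg Finset.card h
                rw [Finset.card_erase_of_mem hkC, hcn1, Finset.card_univ,
                  Fintype.card_fin] at this
                omega
            · rw [sds_not_mem hkC] at hBc
              rcases hBc with h | h
              · rw [Finset.card_insert_of_notMem hkC, hcn1] at h; omega
              · right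
                have hwB : Dset v w = univ := by rw [hB w, hk, sds_not_mem hkC, h]
                rw [← flp_Dset v w, hwB]
                rfl
          · left
            rw [← flp_Dset u w, hAu]
        · rintro (rfl | rfl)
          · constructor
            · right; exact flp_self u univ
            · left
              rw [hB, flp_self, sds_univ, Finset.card_compl, hcn1, Fintype.card_fin]
              omega
          · constructor
            · left
              have : Dset u (flp v univ) = Dset u v ∆ univ := Dset_flp v u univ
              rw [this, ← hC, sds_univ, Finset.card_compl, hcn1, Fintype.card_fin]
              omega
            · right; exact flp_self v univ
      rw [hSeq]
      apply Set.ncard_pair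
      intro he
      have h1 : Dset v (flp u univ) = Dset v (flp v univ) := by rw [he]
      rw [flp_self, Dset_flp, Dset_comm v u, ← hC, sds_univ] at h1
      have := congrArg Finset.card h1
      rw [Finset.card_compl, hcn1, Finset.card_univ, Fintype.card_fin] at this
      omega
    · right
      rw [Set.eq_empty_iff_forall_notMem]
      intro w hw
      rw [hmem w] at hw
      obtain ⟨hA, hBc⟩ := hw
      rw [hB w] at hBc
      rcases hA with hA1 | hAu
      · obtain ⟨k, hk⟩ := Finset.card_eq_one.mp hA1
        rw [hk] at hBc
        by_cases hkC : k ∈ C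
        · rw [sds_mem hkC] at hBc
          rcases hBc with h | h
          · rw [Finset.card_erase_of_mem hkC] at h
            apply hc2
            omega
          · have := congrArg Finset.card h
            rw [Finset.card_erase_of_mem hkC, Finset.card_univ, Fintype.card_fin] at this
            omega
        · rw [sds_not_mem hkC] at hBc
          rcases hBc with h | h
          · rw [Finset.card_insert_of_notMem hkC] at h; omega
          · have := congrArg Finset.card h
            rw [Finset.card_insert_of_notMem hkC, Finset.card_univ, Fintype.card_fin] at this
            apply hcn1
            omega
      · rw [hAu, sds_univ] at hBc
        rcases hBc with h | h
        · rw [Finset.card_compl, Fintype.card_fin] at h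
          apply hcn1
          omega
        · have := congrArg Finset.card h
          rw [Finset.card_compl, Finset.card_univ, Fintype.card_fin] at this
          omega
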